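/- The set of zeros of H(x) = h(x₁²,…,x₅²) on the unit sphere S⁴ ⊂ ℝ⁵ is exactly the union of the ten circles S₁^± ∪ ⋯ ∪ S₅^±, where S₁^± = {(±1/√2, a, 0, 0, b) : a² + b² = 1/2} and S₂^±,…,S₅^± are its cyclic shifts (e.g. S₂^± = {(b, ±1/√2, a, 0, 0) : a² + b² = 1/2}). -/
import Mathlib

lemma keyLemma (a b c d e : ℝ) (ha : 0 ≤ a) (hb : 0 ≤ b) (hc : 0 ≤ c) (hd : 0 ≤ d) (he : 0 ≤ e)
    (hab : a ≤ b) (hae : a ≤ e) (hsum : a + b + c + d + e = 1)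
    (h0 : (a+b+c+d+e)^2 - 4*(a*b+b*c+c*d+d*e+e*a) = 0) :
    (c = 1/2 ∧ e = 0 ∧ a = 0 ∧ d + b = 1/2) ∨
    (d = 1/2 ∧ a = 0 ∧ b = 0 ∧ e + c = 1/2) := by
  have hid1 : (a-b+c-d+e)^2 + 4*(a*d) + 4*(e*(b-a)) = 0 := by linear_combination h0
  have hid2 : (a+b-c+d-e)^2 + 4*(a*c) + 4*(b*(e-a)) = 0 := by linear_combination h0
  have t1 : 0 ≤ a*d := mul_nonneg ha hd
  have t2 : 0 ≤ e*(b-a) := mul_nonneg he (by linarith)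
  have t3 : 0 ≤ a*c := mul_nonneg ha hc
  have t4 : 0 ≤ b*(e-a) := mul_nonneg hb (by linarith)
  have s1 : (a-b+c-d+e)^2 = 0 := le_antisymm (by linarith) (sq_nonneg _)
  have s2 : (a+b-c+d-e)^2 = 0 := le_antisymm (by linarith) (sq_nonneg _)
  have e1 : a-b+c-d+e = 0 := by
    have := sq_eq_zero_iff.mp s1
    linarith
  have e2 : a+b-c+d-e = 0 := by
    have := sq_eq_zero_iff.mp s2
    linarith
  have ha0 : a = 0 := by linarith
  have heba : e*(b-a) = 0 := by linarith
  have hbe : e * b = 0 := by linear_combination heba + e * ha0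
  rcases mul_eq_zero.mp hbe with h | h
  · left; exact ⟨by linarith, h, ha0, by linarith⟩
  · right; exact ⟨by linarith, ha0, h, by linarith⟩

lemma sqHalf (t : ℝ) (h : t ^ 2 = 1/2) :
    ∃ ε : ℝ, (ε = 1 ∨ ε = -1) ∧ t = ε / Real.sqrt 2 := by
  have h2 : Real.sqrt 2 ^ 2 = 2 := Real.sq_sqrt (by norm_num)
  have hne : Real.sqrt 2 ≠ 0 := by positivity
  have hc2 : (1 / Real.sqrt 2) ^ 2 = 1/2 := by
    rw [div_pow, one_pow, h2]
  have hfac : (t - 1 / Real.sqrt 2) * (t + 1 / Real.sqrt 2) = 0 := by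
    linear_combination h - hc2
  rcases mul_eq_zero.mp hfac with h' | h'
  · exact ⟨1, Or.inl rfl, by linarith⟩
  · refine ⟨-1, Or.inr rfl, ?_⟩
    rw [neg_div]
    linarith

lemma finishCircle (x : Fin 5 → ℝ) (j : Fin 5) (h1 : x j ^ 2 = 1/2)
    (h2 : x (j+2) ^ 2 = 0) (h3 : x (j+3) ^ 2 = 0)
    (h4 : x (j+1) ^ 2 + x (j+4) ^ 2 = 1/2) :
    ∃ j : Fin 5, ∃ ε : ℝ, (ε = 1 ∨ ε = -1) ∧ x j = ε / Real.sqrt 2 ∧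
      x (j + 2) = 0 ∧ x (j + 3) = 0 ∧ (x (j + 1)) ^ 2 + (x (j + 4)) ^ 2 = 1 / 2 := by
  obtain ⟨ε, hε, hj⟩ := sqHalf _ h1
  exact ⟨j, ε, hε, hj, by simpa using sq_eq_zero_iff.mp h2, by simpa using sq_eq_zero_iff.mp h3, h4⟩


/-- Membership in the union of the ten circles `S₁^± ∪ ⋯ ∪ S₅^±` in `S⁴ ⊂ ℝ⁵`:
`S₁^± = {(±1/√2, a, 0, 0, b) : a² + b² = 1/2}` and its cyclic shifts. -/
def inTenCircles (x : Fin 5 → ℝ) : Prop :=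
  ∃ j : Fin 5, ∃ ε : ℝ, (ε = 1 ∨ ε = -1) ∧ x j = ε / Real.sqrt 2 ∧
    x (j + 2) = 0 ∧ x (j + 3) = 0 ∧ (x (j + 1)) ^ 2 + (x (j + 4)) ^ 2 = 1 / 2

/-- The zero set on the unit sphere `S⁴` of the Choi–Lam quartic
`H(x) = h(x₁²,…,x₅²)` is exactly the union of the ten circles. -/
theorem stmt4 (x : Fin 5 → ℝ) (hx : ∑ i, x i ^ 2 = 1) :
    ((∑ i, x i ^ 2) ^ 2
        - 4 * (x 0 ^ 2 * x 1 ^ 2 + x 1 ^ 2 * x 2 ^ 2 + x 2 ^ 2 * x 3 ^ 2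
            + x 3 ^ 2 * x 4 ^ 2 + x 4 ^ 2 * x 0 ^ 2) = 0)
      ↔ inTenCircles x := by
  have hs : x 0 ^ 2 + x 1 ^ 2 + x 2 ^ 2 + x 3 ^ 2 + x 4 ^ 2 = 1 := by
    have := hx; rwa [Fin.sum_univ_five] at this
  have ha := sq_nonneg (x 0); have hb := sq_nonneg (x 1); have hc := sq_nonneg (x 2)
  have hd := sq_nonneg (x 3); have he := sq_nonneg (x 4)
  constructor
  · intro H
    rw [hx] at H
    set a := x 0 ^ 2; set b := x 1 ^ 2; set c := x 2 ^ 2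
    set d := x 3 ^ 2; set e := x 4 ^ 2
    have H0 : ∀ a' b' c' d' e' : ℝ, a'+b'+c'+d'+e' = 1 →
        a'*b'+b'*c'+c'*d'+d'*e'+e'*a' = a*b+b*c+c*d+d*e+e*a →
        (a'+b'+c'+d'+e')^2 - 4*(a'*b'+b'*c'+c'*d'+d'*e'+e'*a') = 0 := by
      intro a' b' c' d' e' h1 h2
      rw [h1, h2]
      linarith [H]
    have htot : (a ≤ b ∧ a ≤ e) ∨ (b ≤ c ∧ b ≤ a) ∨ (c ≤ d ∧ c ≤ b) ∨
        (d ≤ e ∧ d ≤ c) ∨ (e ≤ a ∧ e ≤ d) := by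
      rcases le_total a b with h1 | h1 <;> rcases le_total b c with h2 | h2 <;>
        rcases le_total c d with h3 | h3 <;> rcases le_total d e with h4 | h4 <;>
        rcases le_total e a with h5 | h5 <;>
        first
        | (left; constructor <;> linarith)
        | (right; left; constructor <;> linarith)
        | (right; right; left; constructor <;> linarith)
        | (right; right; right; left; constructor <;> linarith)
        | (right; right; right; right; constructor <;> linarith)
    unfold inTenCircles
    rcases htot with ⟨h1, h2⟩ | ⟨h1, h2⟩ | ⟨h1, h2⟩ | ⟨h1, h2⟩ | ⟨h1, h2⟩
    · rcases keyLemma a b c d e ha hb hc hd he h1 h2 (by linarith)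
        (H0 a b c d e (by linarith) (by ring)) with ⟨k1, k2, k3, k4⟩ | ⟨k1, k2, k3, k4⟩
      · exact finishCircle x 2 k1 k2 k3 k4
      · exact finishCircle x 3 k1 k2 k3 k4
    · rcases keyLemma b c d e a hb hc hd he ha h1 h2 (by linarith)
        (H0 b c d e a (by linarith) (by ring)) with ⟨k1, k2, k3, k4⟩ | ⟨k1, k2, k3, k4⟩
      · exact finishCircle x 3 k1 k2 k3 k4
      · exact finishCircle x 4 k1 k2 k3 k4
    · rcases keyLemma c d e a b hc hd he ha hb h1 h2 (by linarith)
        (H0 c d e a b (by linarith) (by ring)) with ⟨k1, k2, k3, k4⟩ | ⟨k1, k2, k3, k4⟩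
      · exact finishCircle x 4 k1 k2 k3 k4
      · exact finishCircle x 0 k1 k2 k3 k4
    · rcases keyLemma d e a b c hd he ha hb hc h1 h2 (by linarith)
        (H0 d e a b c (by linarith) (by ring)) with ⟨k1, k2, k3, k4⟩ | ⟨k1, k2, k3, k4⟩
      · exact finishCircle x 0 k1 k2 k3 k4
      · exact finishCircle x 1 k1 k2 k3 k4
    · rcases keyLemma e a b c d he ha hb hc hd h1 h2 (by linarith)
        (H0 e a b c d (by linarith) (by ring)) with ⟨k1, k2, k3, k4⟩ | ⟨k1, k2, k3, k4⟩
      · exact finishCircle x 1 k1 k2 k3 k4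
      · exact finishCircle x 2 k1 k2 k3 k4
  · rintro ⟨j, ε, hε, hj, h2, h3, h14⟩
    have h2' : Real.sqrt 2 ^ 2 = 2 := Real.sq_sqrt (by norm_num)
    have hne : Real.sqrt 2 ≠ 0 := by positivity
    have hj2 : x j ^ 2 = 1/2 := by
      rcases hε with rfl | rfl <;> rw [hj] <;> rw [div_pow, h2'] <;> norm_num
    rw [hx]
    fin_cases j
    · have k1 : x 0 ^ 2 = 1/2 := hj2
      have k2 : x 2 = 0 := h2
      have k3 : x 3 = 0 := h3
      have k4 : x 1 ^ 2 + x 4 ^ 2 = 1/2 := h14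
      rw [k2, k3]
      linear_combination (-4 : ℝ) * (x 1 ^ 2 + x 4 ^ 2) * k1 + (-2 : ℝ) * k4
    · have k1 : x 1 ^ 2 = 1/2 := hj2
      have k2 : x 3 = 0 := h2
      have k3 : x 4 = 0 := h3
      have k4 : x 2 ^ 2 + x 0 ^ 2 = 1/2 := h14
      rw [k2, k3]
      linear_combination (-4 : ℝ) * (x 2 ^ 2 + x 0 ^ 2) * k1 + (-2 : ℝ) * k4
    · have k1 : x 2 ^ 2 = 1/2 := hj2
      have k2 : x 4 = 0 := h2
      have k3 : x 0 = 0 := h3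
      have k4 : x 3 ^ 2 + x 1 ^ 2 = 1/2 := h14
      rw [k2, k3]
      linear_combination (-4 : ℝ) * (x 3 ^ 2 + x 1 ^ 2) * k1 + (-2 : ℝ) * k4
    · have k1 : x 3 ^ 2 = 1/2 := hj2
      have k2 : x 0 = 0 := h2
      have k3 : x 1 = 0 := h3
      have k4 : x 4 ^ 2 + x 2 ^ 2 = 1/2 := h14
      rw [k2, k3]
      linear_combination (-4 : ℝ) * (x 4 ^ 2 + x 2 ^ 2) * k1 + (-2 : ℝ) * k4
    · have k1 : x 4 ^ 2 = 1/2 := hj2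
      have k2 : x 1 = 0 := h2
      have k3 : x 2 = 0 := h3
      have k4 : x 0 ^ 2 + x 3 ^ 2 = 1/2 := h14
      rw [k2, k3]
      linear_combination (-4 : ℝ) * (x 0 ^ 2 + x 3 ^ 2) * k1 + (-2 : ℝ) * k4
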